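/- Let F be a field and let W̄, W', D, X̄ be finite index types. Let T₁ : Matrix W̄ X̄ F, T₂ : Matrix W' X̄ F, T_D : Matrix D X̄ F, K : Matrix W' D F, and let T₃ be a row vector with columns X̄, and g₁, g₂ row vectors with columns W̄ and W' respectively. Assume T₂ = K · T_D and T₃ = g₁ · T₁ + g₂ · T₂. If M is any right inverse of the stacked matrix [T₁; T_D] (i.e. a matrix M with columns indexed by W̄ ⊕ D such that [T₁; T_D] · M = I), then g₁ = T₃ · M · E, where E is the (W̄ ⊕ D) × W̄ block matrix whose top block is the identity on W̄ and whose bottom block is zero. -/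
import Mathlib


/-- Matrix identity underlying the indirect identification formula: if
`T₂ = K * T_D` and `T₃ = g₁ * T₁ + g₂ * T₂`, then for any right inverse `M`
of the stacked matrix `[T₁; T_D]` one has `g₁ = T₃ * M * E`, where `E` stacks
the identity on `W̄` on top of a zero block. -/
theorem stmt16 {F : Type*} [Field F] {Wb W' D Xb : Type*}
    [Fintype Wb] [Fintype W'] [Fintype D] [Fintype Xb]
    [DecidableEq Wb] [DecidableEq D]
    (T₁ : Matrix Wb Xb F) (T₂ : Matrix W' Xb F) (TD : Matrix D Xb F)
    (K : Matrix W' D F) (T₃ : Matrix Unit Xb F)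
    (g₁ : Matrix Unit Wb F) (g₂ : Matrix Unit W' F)
    (h1 : T₂ = K * TD)
    (h2 : T₃ = g₁ * T₁ + g₂ * T₂)
    (M : Matrix Xb (Wb ⊕ D) F)
    (hM : Matrix.fromRows T₁ TD * M = 1) :
    g₁ = T₃ * M * Matrix.fromRows (1 : Matrix Wb Wb F) (0 : Matrix D Wb F) := by
  have hT3 : T₃ = Matrix.fromCols g₁ (g₂ * K) * Matrix.fromRows T₁ TD := by
    rw [Matrix.fromCols_mul_fromRows, h2, h1, Matrix.mul_assoc]
  rw [hT3, Matrix.mul_assoc, Matrix.mul_assoc, ← Matrix.mul_assoc (Matrix.fromRows T₁ TD), hM, Matrix.one_mul,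
    Matrix.fromCols_mul_fromRows, Matrix.mul_one, Matrix.mul_zero, add_zero]
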